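/- For any W_{XZ} ∈ W̄_{X,Z} and W_{ZY} ∈ W̄_{Z,Y}, and the composed matrix W_{XY} ∈ W̄_{X,Y} of Eq. (32), the per-time-step localization cost satisfies tr[(D^k_{X,Y})ᵀ W_{XY}] ≤ tr[(D^k_{X,Z})ᵀ W_{XZ}] + tr[(D^k_{Z,Y})ᵀ W_{ZY}] whenever p = 1 and the base distance satisfies the triangle inequality d^k_{X,Y}(i,j) ≤ d^k_{X,Z}(i,l) + d^k_{Z,Y}(l,j) for all i, l, j (including unassigned indices, with d^k_{X,Y}(n_X+1, j) = d^k_{Z,Y}(n_Z+1, j) and d^k_{X,Y}(i, n_Y+1) = d^k_{X,Z}(i, n_Z+1)). -/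

import Mathlib

open Finset

/-- The relaxed assignment polytope `W̄`: nonnegative `(m+1) × (n+1)` matrices
whose columns `1..n` sum to `1`, whose rows `1..m` sum to `1`, and whose
bottom-right entry is `0`. -/
def memWbar {m n : ℕ} (W : Matrix (Fin (m + 1)) (Fin (n + 1)) ℝ) : Prop :=
  (∀ i j, 0 ≤ W i j) ∧
  (∀ j : Fin n, ∑ i, W i j.castSucc = 1) ∧
  (∀ i : Fin m, ∑ j, W i.castSucc j = 1) ∧
  W (Fin.last m) (Fin.last n) = 0


/-- Per-time-step localization cost inequality for `p = 1`: with the composed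
matrix `W_{XY}` of Eq. (32), and base distances satisfying the triangle
inequality (including the unassigned-index identities), the localization cost
through `Z` upper-bounds the direct one. -/
theorem composed_localization_le {nX nZ nY : ℕ}
    (dXY : Fin (nX + 1) → Fin (nY + 1) → ℝ)
    (dXZ : Fin (nX + 1) → Fin (nZ + 1) → ℝ)
    (dZY : Fin (nZ + 1) → Fin (nY + 1) → ℝ)
    (hXYnn : ∀ i j, 0 ≤ dXY i j) (hXZnn : ∀ i l, 0 ≤ dXZ i l)
    (hZYnn : ∀ l j, 0 ≤ dZY l j)
    (htri : ∀ i l j, dXY i j ≤ dXZ i l + dZY l j)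
    (hrowid : ∀ i : Fin nX, dXY i.castSucc (Fin.last nY) = dXZ i.castSucc (Fin.last nZ))
    (hcolid : ∀ j : Fin nY, dXY (Fin.last nX) j.castSucc = dZY (Fin.last nZ) j.castSucc)
    (WXZ : Matrix (Fin (nX + 1)) (Fin (nZ + 1)) ℝ)
    (WZY : Matrix (Fin (nZ + 1)) (Fin (nY + 1)) ℝ)
    (WXY : Matrix (Fin (nX + 1)) (Fin (nY + 1)) ℝ)
    (hXZ : memWbar WXZ) (hZY : memWbar WZY) (hXY : memWbar WXY)
    (hreal : ∀ (i : Fin nX) (j : Fin nY),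
      WXY i.castSucc j.castSucc =
        ∑ l : Fin nZ, WXZ i.castSucc l.castSucc * WZY l.castSucc j.castSucc)
    (hrow : ∀ i : Fin nX,
      WXY i.castSucc (Fin.last nY) = 1 - ∑ j : Fin nY, WXY i.castSucc j.castSucc)
    (hcol : ∀ j : Fin nY,
      WXY (Fin.last nX) j.castSucc = 1 - ∑ i : Fin nX, WXY i.castSucc j.castSucc)
    (hcorner : WXY (Fin.last nX) (Fin.last nY) = 0) :
    ∑ i, ∑ j, dXY i j * WXY i j ≤
      (∑ i, ∑ l, dXZ i l * WXZ i l) + ∑ l, ∑ j, dZY l j * WZY l j := by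
  obtain ⟨hXZ0, hXZc, hXZr, hXZcorner⟩ := hXZ
  obtain ⟨hZY0, hZYc, hZYr, hZYcorner⟩ := hZY
  -- partial row/column sums
  have hZYrow : ∀ l : Fin nZ, ∑ j : Fin nY, WZY l.castSucc j.castSucc
      = 1 - WZY l.castSucc (Fin.last nY) := by
    intro l; have h := hZYr l; rw [Fin.sum_univ_castSucc] at h; linarith
  have hXZrow : ∀ i : Fin nX, ∑ l : Fin nZ, WXZ i.castSucc l.castSucc
      = 1 - WXZ i.castSucc (Fin.last nZ) := by
    intro i; have h := hXZr i; rw [Fin.sum_univ_castSucc] at h; linarith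
  have hXZcol : ∀ l : Fin nZ, ∑ i : Fin nX, WXZ i.castSucc l.castSucc
      = 1 - WXZ (Fin.last nX) l.castSucc := by
    intro l; have h := hXZc l; rw [Fin.sum_univ_castSucc] at h; linarith
  have hZYcol : ∀ j : Fin nY, ∑ l : Fin nZ, WZY l.castSucc j.castSucc
      = 1 - WZY (Fin.last nZ) j.castSucc := by
    intro j; have h := hZYc j; rw [Fin.sum_univ_castSucc] at h; linarith
  -- closed forms for the boundary row/column of WXY
  have hRow' : ∀ i : Fin nX, WXY i.castSucc (Fin.last nY)
      = WXZ i.castSucc (Fin.last nZ)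
        + ∑ l : Fin nZ, WXZ i.castSucc l.castSucc * WZY l.castSucc (Fin.last nY) := by
    intro i
    rw [hrow i]
    simp only [hreal]
    rw [Finset.sum_comm]
    have h1 : ∀ l : Fin nZ,
        ∑ j : Fin nY, WXZ i.castSucc l.castSucc * WZY l.castSucc j.castSucc
        = WXZ i.castSucc l.castSucc
          - WXZ i.castSucc l.castSucc * WZY l.castSucc (Fin.last nY) := by
      intro l; rw [← Finset.mul_sum, hZYrow l]; ring
    rw [Finset.sum_congr rfl fun l _ => h1 l, Finset.sum_sub_distrib, hXZrow i]
    ring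
  have hCol' : ∀ j : Fin nY, WXY (Fin.last nX) j.castSucc
      = WZY (Fin.last nZ) j.castSucc
        + ∑ l : Fin nZ, WXZ (Fin.last nX) l.castSucc * WZY l.castSucc j.castSucc := by
    intro j
    rw [hcol j]
    simp only [hreal]
    rw [Finset.sum_comm]
    have h1 : ∀ l : Fin nZ,
        ∑ i : Fin nX, WXZ i.castSucc l.castSucc * WZY l.castSucc j.castSucc
        = WZY l.castSucc j.castSucc
          - WXZ (Fin.last nX) l.castSucc * WZY l.castSucc j.castSucc := by
      intro l; rw [← Finset.sum_mul, hXZcol l]; ring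
    rw [Finset.sum_congr rfl fun l _ => h1 l, Finset.sum_sub_distrib]
    have h2 := hZYcol j
    linarith [h2]
  -- per-l "through Z" costs
  -- R l = real part, Q l = R l + boundary part
  calc ∑ i, ∑ j, dXY i j * WXY i j
      = (∑ i : Fin nX,
          ((∑ j : Fin nY, dXY i.castSucc j.castSucc * WXY i.castSucc j.castSucc)
            + dXY i.castSucc (Fin.last nY) * WXY i.castSucc (Fin.last nY)))
        + ((∑ j : Fin nY, dXY (Fin.last nX) j.castSucc * WXY (Fin.last nX) j.castSucc)
            + dXY (Fin.last nX) (Fin.last nY) * WXY (Fin.last nX) (Fin.last nY)) := by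
        simp only [Fin.sum_univ_castSucc]
    _ ≤ (∑ i : Fin nX,
          ((∑ j : Fin nY, ∑ l : Fin nZ,
              (dXZ i.castSucc l.castSucc + dZY l.castSucc j.castSucc) *
                (WXZ i.castSucc l.castSucc * WZY l.castSucc j.castSucc))
            + (dXZ i.castSucc (Fin.last nZ) * WXZ i.castSucc (Fin.last nZ)
              + ∑ l : Fin nZ, (dXZ i.castSucc l.castSucc + dZY l.castSucc (Fin.last nY)) *
                  (WXZ i.castSucc l.castSucc * WZY l.castSucc (Fin.last nY)))))
        + ((∑ j : Fin nY,
            (dZY (Fin.last nZ) j.castSucc * WZY (Fin.last nZ) j.castSucc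
              + ∑ l : Fin nZ, (dXZ (Fin.last nX) l.castSucc + dZY l.castSucc j.castSucc) *
                  (WXZ (Fin.last nX) l.castSucc * WZY l.castSucc j.castSucc)))
            + 0) := by
        apply add_le_add
        · apply Finset.sum_le_sum; intro i _
          apply add_le_add
          · apply Finset.sum_le_sum; intro j _
            rw [hreal i j, Finset.mul_sum]
            apply Finset.sum_le_sum; intro l _
            exact mul_le_mul_of_nonneg_right (htri _ _ _)
              (mul_nonneg (hXZ0 _ _) (hZY0 _ _))
          · rw [hRow' i, hrowid i, mul_add, Finset.mul_sum]
            apply add_le_add_right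
            apply Finset.sum_le_sum; intro l _
            refine mul_le_mul_of_nonneg_right ?_ (mul_nonneg (hXZ0 _ _) (hZY0 _ _))
            rw [← hrowid i]; exact htri _ _ _
        · rw [hcorner, mul_zero]
          apply add_le_add_left
          apply Finset.sum_le_sum; intro j _
          rw [hCol' j, hcolid j, mul_add, Finset.mul_sum]
          apply add_le_add_right
          apply Finset.sum_le_sum; intro l _
          refine mul_le_mul_of_nonneg_right ?_ (mul_nonneg (hXZ0 _ _) (hZY0 _ _))
          rw [← hcolid j]; exact htri _ _ _
    _ = ((∑ i : Fin nX,
            ((∑ l : Fin nZ, dXZ i.castSucc l.castSucc * WXZ i.castSucc l.castSucc)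
              + dXZ i.castSucc (Fin.last nZ) * WXZ i.castSucc (Fin.last nZ)))
          + ∑ l : Fin nZ, (1 - WXZ (Fin.last nX) l.castSucc) *
              ((∑ j : Fin nY, dZY l.castSucc j.castSucc * WZY l.castSucc j.castSucc)
                + dZY l.castSucc (Fin.last nY) * WZY l.castSucc (Fin.last nY)))
        + ((∑ j : Fin nY, dZY (Fin.last nZ) j.castSucc * WZY (Fin.last nZ) j.castSucc)
          + ∑ l : Fin nZ,
              (dXZ (Fin.last nX) l.castSucc * WXZ (Fin.last nX) l.castSucc *
                  (1 - WZY l.castSucc (Fin.last nY))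
                + WXZ (Fin.last nX) l.castSucc *
                    ∑ j : Fin nY, dZY l.castSucc j.castSucc * WZY l.castSucc j.castSucc)) := by
        have hblock : ∀ i : Fin nX,
            ((∑ j : Fin nY, ∑ l : Fin nZ,
                (dXZ i.castSucc l.castSucc + dZY l.castSucc j.castSucc) *
                  (WXZ i.castSucc l.castSucc * WZY l.castSucc j.castSucc))
              + (dXZ i.castSucc (Fin.last nZ) * WXZ i.castSucc (Fin.last nZ)
                + ∑ l : Fin nZ, (dXZ i.castSucc l.castSucc + dZY l.castSucc (Fin.last nY)) *
                    (WXZ i.castSucc l.castSucc * WZY l.castSucc (Fin.last nY))))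
            = ((∑ l : Fin nZ, dXZ i.castSucc l.castSucc * WXZ i.castSucc l.castSucc)
                + dXZ i.castSucc (Fin.last nZ) * WXZ i.castSucc (Fin.last nZ))
              + ∑ l : Fin nZ, WXZ i.castSucc l.castSucc *
                  ((∑ j : Fin nY, dZY l.castSucc j.castSucc * WZY l.castSucc j.castSucc)
                    + dZY l.castSucc (Fin.last nY) * WZY l.castSucc (Fin.last nY)) := by
          intro i
          rw [Finset.sum_comm]
          have key : ∀ l : Fin nZ,
              (∑ j : Fin nY, (dXZ i.castSucc l.castSucc + dZY l.castSucc j.castSucc) *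
                  (WXZ i.castSucc l.castSucc * WZY l.castSucc j.castSucc))
                + (dXZ i.castSucc l.castSucc + dZY l.castSucc (Fin.last nY)) *
                    (WXZ i.castSucc l.castSucc * WZY l.castSucc (Fin.last nY))
              = dXZ i.castSucc l.castSucc * WXZ i.castSucc l.castSucc
                + WXZ i.castSucc l.castSucc *
                    ((∑ j : Fin nY, dZY l.castSucc j.castSucc * WZY l.castSucc j.castSucc)
                      + dZY l.castSucc (Fin.last nY) * WZY l.castSucc (Fin.last nY)) := by
            intro l
            have e : ∑ j : Fin nY, (dXZ i.castSucc l.castSucc + dZY l.castSucc j.castSucc) *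
                  (WXZ i.castSucc l.castSucc * WZY l.castSucc j.castSucc)
                = dXZ i.castSucc l.castSucc * WXZ i.castSucc l.castSucc *
                    (∑ j : Fin nY, WZY l.castSucc j.castSucc)
                  + WXZ i.castSucc l.castSucc *
                      ∑ j : Fin nY, dZY l.castSucc j.castSucc * WZY l.castSucc j.castSucc := by
              rw [Finset.mul_sum, Finset.mul_sum, ← Finset.sum_add_distrib]
              exact Finset.sum_congr rfl fun j _ => by ring
            rw [e, hZYrow l]; ring
          have comb := Finset.sum_congr rfl fun l (_ : l ∈ Finset.univ) => key l
          rw [Finset.sum_add_distrib, Finset.sum_add_distrib] at comb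
          linarith [comb]
        rw [Finset.sum_congr rfl fun i (_ : i ∈ Finset.univ) => hblock i,
          Finset.sum_add_distrib]
        have hswap : ∑ i : Fin nX, ∑ l : Fin nZ, WXZ i.castSucc l.castSucc *
              ((∑ j : Fin nY, dZY l.castSucc j.castSucc * WZY l.castSucc j.castSucc)
                + dZY l.castSucc (Fin.last nY) * WZY l.castSucc (Fin.last nY))
            = ∑ l : Fin nZ, (1 - WXZ (Fin.last nX) l.castSucc) *
              ((∑ j : Fin nY, dZY l.castSucc j.castSucc * WZY l.castSucc j.castSucc)
                + dZY l.castSucc (Fin.last nY) * WZY l.castSucc (Fin.last nY)) := by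
          rw [Finset.sum_comm]
          refine Finset.sum_congr rfl fun l _ => ?_
          rw [← Finset.sum_mul, hXZcol l]
        rw [hswap]
        have hbd : ∑ j : Fin nY,
              (dZY (Fin.last nZ) j.castSucc * WZY (Fin.last nZ) j.castSucc
                + ∑ l : Fin nZ, (dXZ (Fin.last nX) l.castSucc + dZY l.castSucc j.castSucc) *
                    (WXZ (Fin.last nX) l.castSucc * WZY l.castSucc j.castSucc))
            = (∑ j : Fin nY, dZY (Fin.last nZ) j.castSucc * WZY (Fin.last nZ) j.castSucc)
              + ∑ l : Fin nZ,
                  (dXZ (Fin.last nX) l.castSucc * WXZ (Fin.last nX) l.castSucc *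
                      (1 - WZY l.castSucc (Fin.last nY))
                    + WXZ (Fin.last nX) l.castSucc *
                        ∑ j : Fin nY, dZY l.castSucc j.castSucc * WZY l.castSucc j.castSucc) := by
          rw [Finset.sum_add_distrib]
          congr 1
          rw [Finset.sum_comm]
          refine Finset.sum_congr rfl fun l _ => ?_
          have e : ∑ j : Fin nY, (dXZ (Fin.last nX) l.castSucc + dZY l.castSucc j.castSucc) *
                (WXZ (Fin.last nX) l.castSucc * WZY l.castSucc j.castSucc)
              = dXZ (Fin.last nX) l.castSucc * WXZ (Fin.last nX) l.castSucc *
                  (∑ j : Fin nY, WZY l.castSucc j.castSucc)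
                + WXZ (Fin.last nX) l.castSucc *
                    ∑ j : Fin nY, dZY l.castSucc j.castSucc * WZY l.castSucc j.castSucc := by
            rw [Finset.mul_sum, Finset.mul_sum, ← Finset.sum_add_distrib]
            exact Finset.sum_congr rfl fun j _ => by ring
          rw [e, hZYrow l]
        rw [hbd]
        ring
    _ ≤ ((∑ i : Fin nX,
            ((∑ l : Fin nZ, dXZ i.castSucc l.castSucc * WXZ i.castSucc l.castSucc)
              + dXZ i.castSucc (Fin.last nZ) * WXZ i.castSucc (Fin.last nZ)))
          + ∑ l : Fin nZ, dXZ (Fin.last nX) l.castSucc * WXZ (Fin.last nX) l.castSucc)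
        + ((∑ l : Fin nZ,
              ((∑ j : Fin nY, dZY l.castSucc j.castSucc * WZY l.castSucc j.castSucc)
                + dZY l.castSucc (Fin.last nY) * WZY l.castSucc (Fin.last nY)))
          + ∑ j : Fin nY, dZY (Fin.last nZ) j.castSucc * WZY (Fin.last nZ) j.castSucc) := by
        have hfin : ∀ l : Fin nZ,
            (1 - WXZ (Fin.last nX) l.castSucc) *
                ((∑ j : Fin nY, dZY l.castSucc j.castSucc * WZY l.castSucc j.castSucc)
                  + dZY l.castSucc (Fin.last nY) * WZY l.castSucc (Fin.last nY))
              + (dXZ (Fin.last nX) l.castSucc * WXZ (Fin.last nX) l.castSucc *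
                    (1 - WZY l.castSucc (Fin.last nY))
                  + WXZ (Fin.last nX) l.castSucc *
                      ∑ j : Fin nY, dZY l.castSucc j.castSucc * WZY l.castSucc j.castSucc)
            ≤ dXZ (Fin.last nX) l.castSucc * WXZ (Fin.last nX) l.castSucc
              + ((∑ j : Fin nY, dZY l.castSucc j.castSucc * WZY l.castSucc j.castSucc)
                  + dZY l.castSucc (Fin.last nY) * WZY l.castSucc (Fin.last nY)) := by
          intro l
          have h1 : 0 ≤ WXZ (Fin.last nX) l.castSucc *
              (dZY l.castSucc (Fin.last nY) * WZY l.castSucc (Fin.last nY)) :=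
            mul_nonneg (hXZ0 _ _) (mul_nonneg (hZYnn _ _) (hZY0 _ _))
          have h2 : 0 ≤ dXZ (Fin.last nX) l.castSucc * WXZ (Fin.last nX) l.castSucc *
              WZY l.castSucc (Fin.last nY) :=
            mul_nonneg (mul_nonneg (hXZnn _ _) (hXZ0 _ _)) (hZY0 _ _)
          nlinarith [h1, h2]
        have hsum := Finset.sum_le_sum fun l (_ : l ∈ Finset.univ) => hfin l
        simp only [Finset.sum_add_distrib] at hsum ⊢
        linarith [hsum]
    _ = (∑ i, ∑ l, dXZ i l * WXZ i l) + ∑ l, ∑ j, dZY l j * WZY l j := by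
        simp only [Fin.sum_univ_castSucc, hXZcorner, hZYcorner, mul_zero, add_zero]
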